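/- The state ρ₆₆ is not separable; together with the positivity of its partial transpose, ρ₆₆ is a PPT entangled state. -/

import Mathlib

open Matrix ComplexOrder

noncomputable def N66 : Matrix (Fin 9) (Fin 9) ℂ :=
  !![1, 0, 0, 0, 0, 0, 0, 0, -1;
     0, 2, 0, -1, 0, 0, 0, 0, 0;
     0, 0, 1, 0, 0, 0, 1, 0, 0;
     0, -1, 0, 1, 0, 0, 0, 0, 1;
     0, 0, 0, 0, 1, 0, 1, 0, 0;
     0, 0, 0, 0, 0, 1, 0, -1, 0;
     0, 0, 1, 0, 1, 0, 2, 0, 0;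
     0, 0, 0, 0, 0, -1, 0, 1, 0;
     -1, 0, 0, 1, 0, 0, 0, 0, 3]

/-- The index map `(i, j) ↦ 3 i + j` from `Fin 3 × Fin 3` to `Fin 9`. -/
def idx (p : Fin 3 × Fin 3) : Fin 9 :=
  ⟨3 * p.1.val + p.2.val, by have h1 := p.1.isLt; have h2 := p.2.isLt; omega⟩

/-- The state `ρ₆₆`, viewed as an operator on `ℂ³ ⊗ ℂ³`. -/
noncomputable def rho66 : Matrix (Fin 3 × Fin 3) (Fin 3 × Fin 3) ℂ :=
  fun p q => (1 / 13 : ℂ) * N66 (idx p) (idx q)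

/-- The partial transpose on the second factor: `(ρ^{T_B})_{(i,j),(k,l)} = ρ_{(i,l),(k,j)}`. -/
noncomputable def ptrans (ρ : Matrix (Fin 3 × Fin 3) (Fin 3 × Fin 3) ℂ) :
    Matrix (Fin 3 × Fin 3) (Fin 3 × Fin 3) ℂ :=
  fun p q => ρ (p.1, q.2) (q.1, p.2)

/-- The product vector `a ⊗ b ∈ ℂ³ ⊗ ℂ³`, with `(i,j)`-th component `a i * b j`. -/
def prodVec (a b : Fin 3 → ℂ) : Fin 3 × Fin 3 → ℂ := fun p => a p.1 * b p.2

/-- A matrix on `ℂ³ ⊗ ℂ³` is separable if it is a finite sum of outer products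
`w w†` of product vectors `w = a ⊗ b`. -/
noncomputable def IsSeparableState (ρ : Matrix (Fin 3 × Fin 3) (Fin 3 × Fin 3) ℂ) : Prop :=
  ∃ (k : ℕ) (a b : Fin k → Fin 3 → ℂ),
    ρ = ∑ i : Fin k,
      Matrix.vecMulVec (prodVec (a i) (b i)) (fun q => starRingEnd ℂ (prodVec (a i) (b i) q))


local notation "conj''" => starRingEnd ℂ

@[simp] lemma idx00 : idx (0,0) = 0 := rfl
@[simp] lemma idx01 : idx (0,1) = 1 := rfl
@[simp] lemma idx02 : idx (0,2) = 2 := rfl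
@[simp] lemma idx10 : idx (1,0) = 3 := rfl
@[simp] lemma idx11 : idx (1,1) = 4 := rfl
@[simp] lemma idx12 : idx (1,2) = 5 := rfl
@[simp] lemma idx20 : idx (2,0) = 6 := rfl
@[simp] lemma idx21 : idx (2,1) = 7 := rfl
@[simp] lemma idx22 : idx (2,2) = 8 := rfl

@[simp] lemma rho66_e_00_00 : rho66 ((0:Fin 3),(0:Fin 3)) ((0:Fin 3),(0:Fin 3)) = ((1/13) : ℂ) := by norm_num [rho66, N66, idx, Matrix.cons_val', Matrix.cons_val_zero, Matrix.cons_val_one, Matrix.head_cons, Matrix.head_fin_const, Matrix.cons_val_fin_one, Matrix.empty_val']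
@[simp] lemma rho66_e_00_01 : rho66 ((0:Fin 3),(0:Fin 3)) ((0:Fin 3),(1:Fin 3)) = (0 : ℂ) := by norm_num [rho66, N66, idx, Matrix.cons_val', Matrix.cons_val_zero, Matrix.cons_val_one, Matrix.head_cons, Matrix.head_fin_const, Matrix.cons_val_fin_one, Matrix.empty_val']
@[simp] lemma rho66_e_00_02 : rho66 ((0:Fin 3),(0:Fin 3)) ((0:Fin 3),(2:Fin 3)) = (0 : ℂ) := by norm_num [rho66, N66, idx, Matrix.cons_val', Matrix.cons_val_zero, Matrix.cons_val_one, Matrix.head_cons, Matrix.head_fin_const, Matrix.cons_val_fin_one, Matrix.empty_val']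
@[simp] lemma rho66_e_00_10 : rho66 ((0:Fin 3),(0:Fin 3)) ((1:Fin 3),(0:Fin 3)) = (0 : ℂ) := by norm_num [rho66, N66, idx, Matrix.cons_val', Matrix.cons_val_zero, Matrix.cons_val_one, Matrix.head_cons, Matrix.head_fin_const, Matrix.cons_val_fin_one, Matrix.empty_val']
@[simp] lemma rho66_e_00_11 : rho66 ((0:Fin 3),(0:Fin 3)) ((1:Fin 3),(1:Fin 3)) = (0 : ℂ) := by norm_num [rho66, N66, idx, Matrix.cons_val', Matrix.cons_val_zero, Matrix.cons_val_one, Matrix.head_cons, Matrix.head_fin_const, Matrix.cons_val_fin_one, Matrix.empty_val']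
@[simp] lemma rho66_e_00_12 : rho66 ((0:Fin 3),(0:Fin 3)) ((1:Fin 3),(2:Fin 3)) = (0 : ℂ) := by norm_num [rho66, N66, idx, Matrix.cons_val', Matrix.cons_val_zero, Matrix.cons_val_one, Matrix.head_cons, Matrix.head_fin_const, Matrix.cons_val_fin_one, Matrix.empty_val']
@[simp] lemma rho66_e_00_20 : rho66 ((0:Fin 3),(0:Fin 3)) ((2:Fin 3),(0:Fin 3)) = (0 : ℂ) := by norm_num [rho66, N66, idx, Matrix.cons_val', Matrix.cons_val_zero, Matrix.cons_val_one, Matrix.head_cons, Matrix.head_fin_const, Matrix.cons_val_fin_one, Matrix.empty_val']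
@[simp] lemma rho66_e_00_21 : rho66 ((0:Fin 3),(0:Fin 3)) ((2:Fin 3),(1:Fin 3)) = (0 : ℂ) := by norm_num [rho66, N66, idx, Matrix.cons_val', Matrix.cons_val_zero, Matrix.cons_val_one, Matrix.head_cons, Matrix.head_fin_const, Matrix.cons_val_fin_one, Matrix.empty_val']
@[simp] lemma rho66_e_00_22 : rho66 ((0:Fin 3),(0:Fin 3)) ((2:Fin 3),(2:Fin 3)) = ((-(1/13)) : ℂ) := by norm_num [rho66, N66, idx, Matrix.cons_val', Matrix.cons_val_zero, Matrix.cons_val_one, Matrix.head_cons, Matrix.head_fin_const, Matrix.cons_val_fin_one, Matrix.empty_val']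
@[simp] lemma rho66_e_01_00 : rho66 ((0:Fin 3),(1:Fin 3)) ((0:Fin 3),(0:Fin 3)) = (0 : ℂ) := by norm_num [rho66, N66, idx, Matrix.cons_val', Matrix.cons_val_zero, Matrix.cons_val_one, Matrix.head_cons, Matrix.head_fin_const, Matrix.cons_val_fin_one, Matrix.empty_val']
@[simp] lemma rho66_e_01_01 : rho66 ((0:Fin 3),(1:Fin 3)) ((0:Fin 3),(1:Fin 3)) = ((2/13) : ℂ) := by norm_num [rho66, N66, idx, Matrix.cons_val', Matrix.cons_val_zero, Matrix.cons_val_one, Matrix.head_cons, Matrix.head_fin_const, Matrix.cons_val_fin_one, Matrix.empty_val']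
@[simp] lemma rho66_e_01_02 : rho66 ((0:Fin 3),(1:Fin 3)) ((0:Fin 3),(2:Fin 3)) = (0 : ℂ) := by norm_num [rho66, N66, idx, Matrix.cons_val', Matrix.cons_val_zero, Matrix.cons_val_one, Matrix.head_cons, Matrix.head_fin_const, Matrix.cons_val_fin_one, Matrix.empty_val']
@[simp] lemma rho66_e_01_10 : rho66 ((0:Fin 3),(1:Fin 3)) ((1:Fin 3),(0:Fin 3)) = ((-(1/13)) : ℂ) := by norm_num [rho66, N66, idx, Matrix.cons_val', Matrix.cons_val_zero, Matrix.cons_val_one, Matrix.head_cons, Matrix.head_fin_const, Matrix.cons_val_fin_one, Matrix.empty_val']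
@[simp] lemma rho66_e_01_11 : rho66 ((0:Fin 3),(1:Fin 3)) ((1:Fin 3),(1:Fin 3)) = (0 : ℂ) := by norm_num [rho66, N66, idx, Matrix.cons_val', Matrix.cons_val_zero, Matrix.cons_val_one, Matrix.head_cons, Matrix.head_fin_const, Matrix.cons_val_fin_one, Matrix.empty_val']
@[simp] lemma rho66_e_01_12 : rho66 ((0:Fin 3),(1:Fin 3)) ((1:Fin 3),(2:Fin 3)) = (0 : ℂ) := by norm_num [rho66, N66, idx, Matrix.cons_val', Matrix.cons_val_zero, Matrix.cons_val_one, Matrix.head_cons, Matrix.head_fin_const, Matrix.cons_val_fin_one, Matrix.empty_val']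
@[simp] lemma rho66_e_01_20 : rho66 ((0:Fin 3),(1:Fin 3)) ((2:Fin 3),(0:Fin 3)) = (0 : ℂ) := by norm_num [rho66, N66, idx, Matrix.cons_val', Matrix.cons_val_zero, Matrix.cons_val_one, Matrix.head_cons, Matrix.head_fin_const, Matrix.cons_val_fin_one, Matrix.empty_val']
@[simp] lemma rho66_e_01_21 : rho66 ((0:Fin 3),(1:Fin 3)) ((2:Fin 3),(1:Fin 3)) = (0 : ℂ) := by norm_num [rho66, N66, idx, Matrix.cons_val', Matrix.cons_val_zero, Matrix.cons_val_one, Matrix.head_cons, Matrix.head_fin_const, Matrix.cons_val_fin_one, Matrix.empty_val']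
@[simp] lemma rho66_e_01_22 : rho66 ((0:Fin 3),(1:Fin 3)) ((2:Fin 3),(2:Fin 3)) = (0 : ℂ) := by norm_num [rho66, N66, idx, Matrix.cons_val', Matrix.cons_val_zero, Matrix.cons_val_one, Matrix.head_cons, Matrix.head_fin_const, Matrix.cons_val_fin_one, Matrix.empty_val']
@[simp] lemma rho66_e_02_00 : rho66 ((0:Fin 3),(2:Fin 3)) ((0:Fin 3),(0:Fin 3)) = (0 : ℂ) := by norm_num [rho66, N66, idx, Matrix.cons_val', Matrix.cons_val_zero, Matrix.cons_val_one, Matrix.head_cons, Matrix.head_fin_const, Matrix.cons_val_fin_one, Matrix.empty_val']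
@[simp] lemma rho66_e_02_01 : rho66 ((0:Fin 3),(2:Fin 3)) ((0:Fin 3),(1:Fin 3)) = (0 : ℂ) := by norm_num [rho66, N66, idx, Matrix.cons_val', Matrix.cons_val_zero, Matrix.cons_val_one, Matrix.head_cons, Matrix.head_fin_const, Matrix.cons_val_fin_one, Matrix.empty_val']
@[simp] lemma rho66_e_02_02 : rho66 ((0:Fin 3),(2:Fin 3)) ((0:Fin 3),(2:Fin 3)) = ((1/13) : ℂ) := by norm_num [rho66, N66, idx, Matrix.cons_val', Matrix.cons_val_zero, Matrix.cons_val_one, Matrix.head_cons, Matrix.head_fin_const, Matrix.cons_val_fin_one, Matrix.empty_val']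
@[simp] lemma rho66_e_02_10 : rho66 ((0:Fin 3),(2:Fin 3)) ((1:Fin 3),(0:Fin 3)) = (0 : ℂ) := by norm_num [rho66, N66, idx, Matrix.cons_val', Matrix.cons_val_zero, Matrix.cons_val_one, Matrix.head_cons, Matrix.head_fin_const, Matrix.cons_val_fin_one, Matrix.empty_val']
@[simp] lemma rho66_e_02_11 : rho66 ((0:Fin 3),(2:Fin 3)) ((1:Fin 3),(1:Fin 3)) = (0 : ℂ) := by norm_num [rho66, N66, idx, Matrix.cons_val', Matrix.cons_val_zero, Matrix.cons_val_one, Matrix.head_cons, Matrix.head_fin_const, Matrix.cons_val_fin_one, Matrix.empty_val']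
@[simp] lemma rho66_e_02_12 : rho66 ((0:Fin 3),(2:Fin 3)) ((1:Fin 3),(2:Fin 3)) = (0 : ℂ) := by norm_num [rho66, N66, idx, Matrix.cons_val', Matrix.cons_val_zero, Matrix.cons_val_one, Matrix.head_cons, Matrix.head_fin_const, Matrix.cons_val_fin_one, Matrix.empty_val']
@[simp] lemma rho66_e_02_20 : rho66 ((0:Fin 3),(2:Fin 3)) ((2:Fin 3),(0:Fin 3)) = ((1/13) : ℂ) := by norm_num [rho66, N66, idx, Matrix.cons_val', Matrix.cons_val_zero, Matrix.cons_val_one, Matrix.head_cons, Matrix.head_fin_const, Matrix.cons_val_fin_one, Matrix.empty_val']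
@[simp] lemma rho66_e_02_21 : rho66 ((0:Fin 3),(2:Fin 3)) ((2:Fin 3),(1:Fin 3)) = (0 : ℂ) := by norm_num [rho66, N66, idx, Matrix.cons_val', Matrix.cons_val_zero, Matrix.cons_val_one, Matrix.head_cons, Matrix.head_fin_const, Matrix.cons_val_fin_one, Matrix.empty_val']
@[simp] lemma rho66_e_02_22 : rho66 ((0:Fin 3),(2:Fin 3)) ((2:Fin 3),(2:Fin 3)) = (0 : ℂ) := by norm_num [rho66, N66, idx, Matrix.cons_val', Matrix.cons_val_zero, Matrix.cons_val_one, Matrix.head_cons, Matrix.head_fin_const, Matrix.cons_val_fin_one, Matrix.empty_val']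
@[simp] lemma rho66_e_10_00 : rho66 ((1:Fin 3),(0:Fin 3)) ((0:Fin 3),(0:Fin 3)) = (0 : ℂ) := by norm_num [rho66, N66, idx, Matrix.cons_val', Matrix.cons_val_zero, Matrix.cons_val_one, Matrix.head_cons, Matrix.head_fin_const, Matrix.cons_val_fin_one, Matrix.empty_val']
@[simp] lemma rho66_e_10_01 : rho66 ((1:Fin 3),(0:Fin 3)) ((0:Fin 3),(1:Fin 3)) = ((-(1/13)) : ℂ) := by norm_num [rho66, N66, idx, Matrix.cons_val', Matrix.cons_val_zero, Matrix.cons_val_one, Matrix.head_cons, Matrix.head_fin_const, Matrix.cons_val_fin_one, Matrix.empty_val']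
@[simp] lemma rho66_e_10_02 : rho66 ((1:Fin 3),(0:Fin 3)) ((0:Fin 3),(2:Fin 3)) = (0 : ℂ) := by norm_num [rho66, N66, idx, Matrix.cons_val', Matrix.cons_val_zero, Matrix.cons_val_one, Matrix.head_cons, Matrix.head_fin_const, Matrix.cons_val_fin_one, Matrix.empty_val']
@[simp] lemma rho66_e_10_10 : rho66 ((1:Fin 3),(0:Fin 3)) ((1:Fin 3),(0:Fin 3)) = ((1/13) : ℂ) := by norm_num [rho66, N66, idx, Matrix.cons_val', Matrix.cons_val_zero, Matrix.cons_val_one, Matrix.head_cons, Matrix.head_fin_const, Matrix.cons_val_fin_one, Matrix.empty_val']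
@[simp] lemma rho66_e_10_11 : rho66 ((1:Fin 3),(0:Fin 3)) ((1:Fin 3),(1:Fin 3)) = (0 : ℂ) := by norm_num [rho66, N66, idx, Matrix.cons_val', Matrix.cons_val_zero, Matrix.cons_val_one, Matrix.head_cons, Matrix.head_fin_const, Matrix.cons_val_fin_one, Matrix.empty_val']
@[simp] lemma rho66_e_10_12 : rho66 ((1:Fin 3),(0:Fin 3)) ((1:Fin 3),(2:Fin 3)) = (0 : ℂ) := by norm_num [rho66, N66, idx, Matrix.cons_val', Matrix.cons_val_zero, Matrix.cons_val_one, Matrix.head_cons, Matrix.head_fin_const, Matrix.cons_val_fin_one, Matrix.empty_val']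
@[simp] lemma rho66_e_10_20 : rho66 ((1:Fin 3),(0:Fin 3)) ((2:Fin 3),(0:Fin 3)) = (0 : ℂ) := by norm_num [rho66, N66, idx, Matrix.cons_val', Matrix.cons_val_zero, Matrix.cons_val_one, Matrix.head_cons, Matrix.head_fin_const, Matrix.cons_val_fin_one, Matrix.empty_val']
@[simp] lemma rho66_e_10_21 : rho66 ((1:Fin 3),(0:Fin 3)) ((2:Fin 3),(1:Fin 3)) = (0 : ℂ) := by norm_num [rho66, N66, idx, Matrix.cons_val', Matrix.cons_val_zero, Matrix.cons_val_one, Matrix.head_cons, Matrix.head_fin_const, Matrix.cons_val_fin_one, Matrix.empty_val']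
@[simp] lemma rho66_e_10_22 : rho66 ((1:Fin 3),(0:Fin 3)) ((2:Fin 3),(2:Fin 3)) = ((1/13) : ℂ) := by norm_num [rho66, N66, idx, Matrix.cons_val', Matrix.cons_val_zero, Matrix.cons_val_one, Matrix.head_cons, Matrix.head_fin_const, Matrix.cons_val_fin_one, Matrix.empty_val']
@[simp] lemma rho66_e_11_00 : rho66 ((1:Fin 3),(1:Fin 3)) ((0:Fin 3),(0:Fin 3)) = (0 : ℂ) := by norm_num [rho66, N66, idx, Matrix.cons_val', Matrix.cons_val_zero, Matrix.cons_val_one, Matrix.head_cons, Matrix.head_fin_const, Matrix.cons_val_fin_one, Matrix.empty_val']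
@[simp] lemma rho66_e_11_01 : rho66 ((1:Fin 3),(1:Fin 3)) ((0:Fin 3),(1:Fin 3)) = (0 : ℂ) := by norm_num [rho66, N66, idx, Matrix.cons_val', Matrix.cons_val_zero, Matrix.cons_val_one, Matrix.head_cons, Matrix.head_fin_const, Matrix.cons_val_fin_one, Matrix.empty_val']
@[simp] lemma rho66_e_11_02 : rho66 ((1:Fin 3),(1:Fin 3)) ((0:Fin 3),(2:Fin 3)) = (0 : ℂ) := by norm_num [rho66, N66, idx, Matrix.cons_val', Matrix.cons_val_zero, Matrix.cons_val_one, Matrix.head_cons, Matrix.head_fin_const, Matrix.cons_val_fin_one, Matrix.empty_val']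
@[simp] lemma rho66_e_11_10 : rho66 ((1:Fin 3),(1:Fin 3)) ((1:Fin 3),(0:Fin 3)) = (0 : ℂ) := by norm_num [rho66, N66, idx, Matrix.cons_val', Matrix.cons_val_zero, Matrix.cons_val_one, Matrix.head_cons, Matrix.head_fin_const, Matrix.cons_val_fin_one, Matrix.empty_val']
@[simp] lemma rho66_e_11_11 : rho66 ((1:Fin 3),(1:Fin 3)) ((1:Fin 3),(1:Fin 3)) = ((1/13) : ℂ) := by norm_num [rho66, N66, idx, Matrix.cons_val', Matrix.cons_val_zero, Matrix.cons_val_one, Matrix.head_cons, Matrix.head_fin_const, Matrix.cons_val_fin_one, Matrix.empty_val']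
@[simp] lemma rho66_e_11_12 : rho66 ((1:Fin 3),(1:Fin 3)) ((1:Fin 3),(2:Fin 3)) = (0 : ℂ) := by norm_num [rho66, N66, idx, Matrix.cons_val', Matrix.cons_val_zero, Matrix.cons_val_one, Matrix.head_cons, Matrix.head_fin_const, Matrix.cons_val_fin_one, Matrix.empty_val']
@[simp] lemma rho66_e_11_20 : rho66 ((1:Fin 3),(1:Fin 3)) ((2:Fin 3),(0:Fin 3)) = ((1/13) : ℂ) := by norm_num [rho66, N66, idx, Matrix.cons_val', Matrix.cons_val_zero, Matrix.cons_val_one, Matrix.head_cons, Matrix.head_fin_const, Matrix.cons_val_fin_one, Matrix.empty_val']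
@[simp] lemma rho66_e_11_21 : rho66 ((1:Fin 3),(1:Fin 3)) ((2:Fin 3),(1:Fin 3)) = (0 : ℂ) := by norm_num [rho66, N66, idx, Matrix.cons_val', Matrix.cons_val_zero, Matrix.cons_val_one, Matrix.head_cons, Matrix.head_fin_const, Matrix.cons_val_fin_one, Matrix.empty_val']
@[simp] lemma rho66_e_11_22 : rho66 ((1:Fin 3),(1:Fin 3)) ((2:Fin 3),(2:Fin 3)) = (0 : ℂ) := by norm_num [rho66, N66, idx, Matrix.cons_val', Matrix.cons_val_zero, Matrix.cons_val_one, Matrix.head_cons, Matrix.head_fin_const, Matrix.cons_val_fin_one, Matrix.empty_val']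
@[simp] lemma rho66_e_12_00 : rho66 ((1:Fin 3),(2:Fin 3)) ((0:Fin 3),(0:Fin 3)) = (0 : ℂ) := by norm_num [rho66, N66, idx, Matrix.cons_val', Matrix.cons_val_zero, Matrix.cons_val_one, Matrix.head_cons, Matrix.head_fin_const, Matrix.cons_val_fin_one, Matrix.empty_val']
@[simp] lemma rho66_e_12_01 : rho66 ((1:Fin 3),(2:Fin 3)) ((0:Fin 3),(1:Fin 3)) = (0 : ℂ) := by norm_num [rho66, N66, idx, Matrix.cons_val', Matrix.cons_val_zero, Matrix.cons_val_one, Matrix.head_cons, Matrix.head_fin_const, Matrix.cons_val_fin_one, Matrix.empty_val']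
@[simp] lemma rho66_e_12_02 : rho66 ((1:Fin 3),(2:Fin 3)) ((0:Fin 3),(2:Fin 3)) = (0 : ℂ) := by norm_num [rho66, N66, idx, Matrix.cons_val', Matrix.cons_val_zero, Matrix.cons_val_one, Matrix.head_cons, Matrix.head_fin_const, Matrix.cons_val_fin_one, Matrix.empty_val']
@[simp] lemma rho66_e_12_10 : rho66 ((1:Fin 3),(2:Fin 3)) ((1:Fin 3),(0:Fin 3)) = (0 : ℂ) := by norm_num [rho66, N66, idx, Matrix.cons_val', Matrix.cons_val_zero, Matrix.cons_val_one, Matrix.head_cons, Matrix.head_fin_const, Matrix.cons_val_fin_one, Matrix.empty_val']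
@[simp] lemma rho66_e_12_11 : rho66 ((1:Fin 3),(2:Fin 3)) ((1:Fin 3),(1:Fin 3)) = (0 : ℂ) := by norm_num [rho66, N66, idx, Matrix.cons_val', Matrix.cons_val_zero, Matrix.cons_val_one, Matrix.head_cons, Matrix.head_fin_const, Matrix.cons_val_fin_one, Matrix.empty_val']
@[simp] lemma rho66_e_12_12 : rho66 ((1:Fin 3),(2:Fin 3)) ((1:Fin 3),(2:Fin 3)) = ((1/13) : ℂ) := by norm_num [rho66, N66, idx, Matrix.cons_val', Matrix.cons_val_zero, Matrix.cons_val_one, Matrix.head_cons, Matrix.head_fin_const, Matrix.cons_val_fin_one, Matrix.empty_val']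
@[simp] lemma rho66_e_12_20 : rho66 ((1:Fin 3),(2:Fin 3)) ((2:Fin 3),(0:Fin 3)) = (0 : ℂ) := by norm_num [rho66, N66, idx, Matrix.cons_val', Matrix.cons_val_zero, Matrix.cons_val_one, Matrix.head_cons, Matrix.head_fin_const, Matrix.cons_val_fin_one, Matrix.empty_val']
@[simp] lemma rho66_e_12_21 : rho66 ((1:Fin 3),(2:Fin 3)) ((2:Fin 3),(1:Fin 3)) = ((-(1/13)) : ℂ) := by norm_num [rho66, N66, idx, Matrix.cons_val', Matrix.cons_val_zero, Matrix.cons_val_one, Matrix.head_cons, Matrix.head_fin_const, Matrix.cons_val_fin_one, Matrix.empty_val']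
@[simp] lemma rho66_e_12_22 : rho66 ((1:Fin 3),(2:Fin 3)) ((2:Fin 3),(2:Fin 3)) = (0 : ℂ) := by norm_num [rho66, N66, idx, Matrix.cons_val', Matrix.cons_val_zero, Matrix.cons_val_one, Matrix.head_cons, Matrix.head_fin_const, Matrix.cons_val_fin_one, Matrix.empty_val']
@[simp] lemma rho66_e_20_00 : rho66 ((2:Fin 3),(0:Fin 3)) ((0:Fin 3),(0:Fin 3)) = (0 : ℂ) := by norm_num [rho66, N66, idx, Matrix.cons_val', Matrix.cons_val_zero, Matrix.cons_val_one, Matrix.head_cons, Matrix.head_fin_const, Matrix.cons_val_fin_one, Matrix.empty_val']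
@[simp] lemma rho66_e_20_01 : rho66 ((2:Fin 3),(0:Fin 3)) ((0:Fin 3),(1:Fin 3)) = (0 : ℂ) := by norm_num [rho66, N66, idx, Matrix.cons_val', Matrix.cons_val_zero, Matrix.cons_val_one, Matrix.head_cons, Matrix.head_fin_const, Matrix.cons_val_fin_one, Matrix.empty_val']
@[simp] lemma rho66_e_20_02 : rho66 ((2:Fin 3),(0:Fin 3)) ((0:Fin 3),(2:Fin 3)) = ((1/13) : ℂ) := by norm_num [rho66, N66, idx, Matrix.cons_val', Matrix.cons_val_zero, Matrix.cons_val_one, Matrix.head_cons, Matrix.head_fin_const, Matrix.cons_val_fin_one, Matrix.empty_val']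
@[simp] lemma rho66_e_20_10 : rho66 ((2:Fin 3),(0:Fin 3)) ((1:Fin 3),(0:Fin 3)) = (0 : ℂ) := by norm_num [rho66, N66, idx, Matrix.cons_val', Matrix.cons_val_zero, Matrix.cons_val_one, Matrix.head_cons, Matrix.head_fin_const, Matrix.cons_val_fin_one, Matrix.empty_val']
@[simp] lemma rho66_e_20_11 : rho66 ((2:Fin 3),(0:Fin 3)) ((1:Fin 3),(1:Fin 3)) = ((1/13) : ℂ) := by norm_num [rho66, N66, idx, Matrix.cons_val', Matrix.cons_val_zero, Matrix.cons_val_one, Matrix.head_cons, Matrix.head_fin_const, Matrix.cons_val_fin_one, Matrix.empty_val']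
@[simp] lemma rho66_e_20_12 : rho66 ((2:Fin 3),(0:Fin 3)) ((1:Fin 3),(2:Fin 3)) = (0 : ℂ) := by norm_num [rho66, N66, idx, Matrix.cons_val', Matrix.cons_val_zero, Matrix.cons_val_one, Matrix.head_cons, Matrix.head_fin_const, Matrix.cons_val_fin_one, Matrix.empty_val']
@[simp] lemma rho66_e_20_20 : rho66 ((2:Fin 3),(0:Fin 3)) ((2:Fin 3),(0:Fin 3)) = ((2/13) : ℂ) := by norm_num [rho66, N66, idx, Matrix.cons_val', Matrix.cons_val_zero, Matrix.cons_val_one, Matrix.head_cons, Matrix.head_fin_const, Matrix.cons_val_fin_one, Matrix.empty_val']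
@[simp] lemma rho66_e_20_21 : rho66 ((2:Fin 3),(0:Fin 3)) ((2:Fin 3),(1:Fin 3)) = (0 : ℂ) := by norm_num [rho66, N66, idx, Matrix.cons_val', Matrix.cons_val_zero, Matrix.cons_val_one, Matrix.head_cons, Matrix.head_fin_const, Matrix.cons_val_fin_one, Matrix.empty_val']
@[simp] lemma rho66_e_20_22 : rho66 ((2:Fin 3),(0:Fin 3)) ((2:Fin 3),(2:Fin 3)) = (0 : ℂ) := by norm_num [rho66, N66, idx, Matrix.cons_val', Matrix.cons_val_zero, Matrix.cons_val_one, Matrix.head_cons, Matrix.head_fin_const, Matrix.cons_val_fin_one, Matrix.empty_val']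
@[simp] lemma rho66_e_21_00 : rho66 ((2:Fin 3),(1:Fin 3)) ((0:Fin 3),(0:Fin 3)) = (0 : ℂ) := by norm_num [rho66, N66, idx, Matrix.cons_val', Matrix.cons_val_zero, Matrix.cons_val_one, Matrix.head_cons, Matrix.head_fin_const, Matrix.cons_val_fin_one, Matrix.empty_val']
@[simp] lemma rho66_e_21_01 : rho66 ((2:Fin 3),(1:Fin 3)) ((0:Fin 3),(1:Fin 3)) = (0 : ℂ) := by norm_num [rho66, N66, idx, Matrix.cons_val', Matrix.cons_val_zero, Matrix.cons_val_one, Matrix.head_cons, Matrix.head_fin_const, Matrix.cons_val_fin_one, Matrix.empty_val']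
@[simp] lemma rho66_e_21_02 : rho66 ((2:Fin 3),(1:Fin 3)) ((0:Fin 3),(2:Fin 3)) = (0 : ℂ) := by norm_num [rho66, N66, idx, Matrix.cons_val', Matrix.cons_val_zero, Matrix.cons_val_one, Matrix.head_cons, Matrix.head_fin_const, Matrix.cons_val_fin_one, Matrix.empty_val']
@[simp] lemma rho66_e_21_10 : rho66 ((2:Fin 3),(1:Fin 3)) ((1:Fin 3),(0:Fin 3)) = (0 : ℂ) := by norm_num [rho66, N66, idx, Matrix.cons_val', Matrix.cons_val_zero, Matrix.cons_val_one, Matrix.head_cons, Matrix.head_fin_const, Matrix.cons_val_fin_one, Matrix.empty_val']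
@[simp] lemma rho66_e_21_11 : rho66 ((2:Fin 3),(1:Fin 3)) ((1:Fin 3),(1:Fin 3)) = (0 : ℂ) := by norm_num [rho66, N66, idx, Matrix.cons_val', Matrix.cons_val_zero, Matrix.cons_val_one, Matrix.head_cons, Matrix.head_fin_const, Matrix.cons_val_fin_one, Matrix.empty_val']
@[simp] lemma rho66_e_21_12 : rho66 ((2:Fin 3),(1:Fin 3)) ((1:Fin 3),(2:Fin 3)) = ((-(1/13)) : ℂ) := by norm_num [rho66, N66, idx, Matrix.cons_val', Matrix.cons_val_zero, Matrix.cons_val_one, Matrix.head_cons, Matrix.head_fin_const, Matrix.cons_val_fin_one, Matrix.empty_val']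
@[simp] lemma rho66_e_21_20 : rho66 ((2:Fin 3),(1:Fin 3)) ((2:Fin 3),(0:Fin 3)) = (0 : ℂ) := by norm_num [rho66, N66, idx, Matrix.cons_val', Matrix.cons_val_zero, Matrix.cons_val_one, Matrix.head_cons, Matrix.head_fin_const, Matrix.cons_val_fin_one, Matrix.empty_val']
@[simp] lemma rho66_e_21_21 : rho66 ((2:Fin 3),(1:Fin 3)) ((2:Fin 3),(1:Fin 3)) = ((1/13) : ℂ) := by norm_num [rho66, N66, idx, Matrix.cons_val', Matrix.cons_val_zero, Matrix.cons_val_one, Matrix.head_cons, Matrix.head_fin_const, Matrix.cons_val_fin_one, Matrix.empty_val']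
@[simp] lemma rho66_e_21_22 : rho66 ((2:Fin 3),(1:Fin 3)) ((2:Fin 3),(2:Fin 3)) = (0 : ℂ) := by norm_num [rho66, N66, idx, Matrix.cons_val', Matrix.cons_val_zero, Matrix.cons_val_one, Matrix.head_cons, Matrix.head_fin_const, Matrix.cons_val_fin_one, Matrix.empty_val']
@[simp] lemma rho66_e_22_00 : rho66 ((2:Fin 3),(2:Fin 3)) ((0:Fin 3),(0:Fin 3)) = ((-(1/13)) : ℂ) := by norm_num [rho66, N66, idx, Matrix.cons_val', Matrix.cons_val_zero, Matrix.cons_val_one, Matrix.head_cons, Matrix.head_fin_const, Matrix.cons_val_fin_one, Matrix.empty_val']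
@[simp] lemma rho66_e_22_01 : rho66 ((2:Fin 3),(2:Fin 3)) ((0:Fin 3),(1:Fin 3)) = (0 : ℂ) := by norm_num [rho66, N66, idx, Matrix.cons_val', Matrix.cons_val_zero, Matrix.cons_val_one, Matrix.head_cons, Matrix.head_fin_const, Matrix.cons_val_fin_one, Matrix.empty_val']
@[simp] lemma rho66_e_22_02 : rho66 ((2:Fin 3),(2:Fin 3)) ((0:Fin 3),(2:Fin 3)) = (0 : ℂ) := by norm_num [rho66, N66, idx, Matrix.cons_val', Matrix.cons_val_zero, Matrix.cons_val_one, Matrix.head_cons, Matrix.head_fin_const, Matrix.cons_val_fin_one, Matrix.empty_val']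
@[simp] lemma rho66_e_22_10 : rho66 ((2:Fin 3),(2:Fin 3)) ((1:Fin 3),(0:Fin 3)) = ((1/13) : ℂ) := by norm_num [rho66, N66, idx, Matrix.cons_val', Matrix.cons_val_zero, Matrix.cons_val_one, Matrix.head_cons, Matrix.head_fin_const, Matrix.cons_val_fin_one, Matrix.empty_val']
@[simp] lemma rho66_e_22_11 : rho66 ((2:Fin 3),(2:Fin 3)) ((1:Fin 3),(1:Fin 3)) = (0 : ℂ) := by norm_num [rho66, N66, idx, Matrix.cons_val', Matrix.cons_val_zero, Matrix.cons_val_one, Matrix.head_cons, Matrix.head_fin_const, Matrix.cons_val_fin_one, Matrix.empty_val']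
@[simp] lemma rho66_e_22_12 : rho66 ((2:Fin 3),(2:Fin 3)) ((1:Fin 3),(2:Fin 3)) = (0 : ℂ) := by norm_num [rho66, N66, idx, Matrix.cons_val', Matrix.cons_val_zero, Matrix.cons_val_one, Matrix.head_cons, Matrix.head_fin_const, Matrix.cons_val_fin_one, Matrix.empty_val']
@[simp] lemma rho66_e_22_20 : rho66 ((2:Fin 3),(2:Fin 3)) ((2:Fin 3),(0:Fin 3)) = (0 : ℂ) := by norm_num [rho66, N66, idx, Matrix.cons_val', Matrix.cons_val_zero, Matrix.cons_val_one, Matrix.head_cons, Matrix.head_fin_const, Matrix.cons_val_fin_one, Matrix.empty_val']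
@[simp] lemma rho66_e_22_21 : rho66 ((2:Fin 3),(2:Fin 3)) ((2:Fin 3),(1:Fin 3)) = (0 : ℂ) := by norm_num [rho66, N66, idx, Matrix.cons_val', Matrix.cons_val_zero, Matrix.cons_val_one, Matrix.head_cons, Matrix.head_fin_const, Matrix.cons_val_fin_one, Matrix.empty_val']
@[simp] lemma rho66_e_22_22 : rho66 ((2:Fin 3),(2:Fin 3)) ((2:Fin 3),(2:Fin 3)) = ((3/13) : ℂ) := by norm_num [rho66, N66, idx, Matrix.cons_val', Matrix.cons_val_zero, Matrix.cons_val_one, Matrix.head_cons, Matrix.head_fin_const, Matrix.cons_val_fin_one, Matrix.empty_val']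

lemma quad1 (x : Fin 3 × Fin 3 → ℂ) :
    star x ⬝ᵥ rho66 *ᵥ x =
      (((1:ℝ)/26) * (2 * Complex.normSq (x (0,0) - x (2,2))
        + Complex.normSq (2 * x (0,1) - x (1,0))
        + 2 * Complex.normSq (x (0,2) + x (2,0))
        + Complex.normSq (x (1,0) + 2 * x (2,2))
        + 2 * Complex.normSq (x (1,1) + x (2,0))
        + 2 * Complex.normSq (x (1,2) - x (2,1))) : ℝ) := by
  push_cast [← Complex.mul_conj]
  simp only [dotProduct, mulVec, Fintype.sum_prod_type, Fin.sum_univ_three,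
    Pi.star_apply, Complex.star_def]
  simp only [rho66_e_00_00, rho66_e_00_01, rho66_e_00_02, rho66_e_00_10, rho66_e_00_11, rho66_e_00_12, rho66_e_00_20, rho66_e_00_21, rho66_e_00_22, rho66_e_01_00, rho66_e_01_01, rho66_e_01_02, rho66_e_01_10, rho66_e_01_11, rho66_e_01_12, rho66_e_01_20, rho66_e_01_21, rho66_e_01_22, rho66_e_02_00, rho66_e_02_01, rho66_e_02_02, rho66_e_02_10, rho66_e_02_11, rho66_e_02_12, rho66_e_02_20, rho66_e_02_21, rho66_e_02_22, rho66_e_10_00, rho66_e_10_01, rho66_e_10_02, rho66_e_10_10, rho66_e_10_11, rho66_e_10_12, rho66_e_10_20, rho66_e_10_21, rho66_e_10_22, rho66_e_11_00, rho66_e_11_01, rho66_e_11_02, rho66_e_11_10, rho66_e_11_11, rho66_e_11_12, rho66_e_11_20, rho66_e_11_21, rho66_e_11_22, rho66_e_12_00, rho66_e_12_01, rho66_e_12_02, rho66_e_12_10, rho66_e_12_11, rho66_e_12_12, rho66_e_12_20, rho66_e_12_21, rho66_e_12_22, rho66_e_20_00, rho66_e_20_01, rho66_e_20_02, rho66_e_20_10,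 rho66_e_20_11, rho66_e_20_12, rho66_e_20_20, rho66_e_20_21, rho66_e_20_22, rho66_e_21_00, rho66_e_21_01, rho66_e_21_02, rho66_e_21_10, rho66_e_21_11, rho66_e_21_12, rho66_e_21_20, rho66_e_21_21, rho66_e_21_22, rho66_e_22_00, rho66_e_22_01, rho66_e_22_02, rho66_e_22_10, rho66_e_22_11, rho66_e_22_12, rho66_e_22_20, rho66_e_22_21, rho66_e_22_22]
  simp only [map_add, map_sub, _root_.map_mul, map_ofNat, Complex.conj_conj]
  ring

lemma quad2 (x : Fin 3 × Fin 3 → ℂ) :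
    star x ⬝ᵥ (ptrans rho66) *ᵥ x =
      (((1:ℝ)/13) * (Complex.normSq (x (0,0) - x (1,1) + x (2,2))
        + 2 * Complex.normSq (x (0,1))
        + Complex.normSq (x (0,2) - x (2,0))
        + Complex.normSq (x (1,0) + x (2,1))
        + Complex.normSq (x (1,2) + x (2,0))
        + 2 * Complex.normSq (x (2,2))) : ℝ) := by
  push_cast [← Complex.mul_conj]
  simp only [dotProduct, mulVec, Fintype.sum_prod_type, Fin.sum_univ_three,
    Pi.star_apply, Complex.star_def, ptrans]
  simp only [rho66_e_00_00, rho66_e_00_01, rho66_e_00_02, rho66_e_00_10, rho66_e_00_11, rho66_e_00_12, rho66_e_00_20, rho66_e_00_21, rho66_e_00_22, rho66_e_01_00, rho66_e_01_01, rho66_e_01_02, rho66_e_01_10, rho66_e_01_11, rho66_e_01_12, rho66_e_01_20, rho66_e_01_21, rho66_e_01_22, rho66_e_02_00, rho66_e_02_01, rho66_e_02_02, rho66_e_02_10, rho66_e_02_11, rho66_e_02_12, rho66_e_02_20, rho66_e_02_21, rho66_e_02_22, rho66_e_10_00, rho66_e_10_01, rho66_e_10_02, rho66_e_10_10, rho66_e_10_11,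 rho66_e_10_12, rho66_e_10_20, rho66_e_10_21, rho66_e_10_22, rho66_e_11_00, rho66_e_11_01, rho66_e_11_02, rho66_e_11_10, rho66_e_11_11, rho66_e_11_12, rho66_e_11_20, rho66_e_11_21, rho66_e_11_22, rho66_e_12_00, rho66_e_12_01, rho66_e_12_02, rho66_e_12_10, rho66_e_12_11, rho66_e_12_12, rho66_e_12_20, rho66_e_12_21, rho66_e_12_22, rho66_e_20_00, rho66_e_20_01, rho66_e_20_02, rho66_e_20_10, rho66_e_20_11, rho66_e_20_12, rho66_e_20_20, rho66_e_20_21, rho66_e_20_22, rho66_e_21_00, rho66_e_21_01, rho66_e_21_02, rho66_e_21_10, rho66_e_21_11, rho66_e_21_12, rho66_e_21_20, rho66_e_21_21, rho66_e_21_22, rho66_e_22_00, rho66_e_22_01, rho66_e_22_02, rho66_e_22_10, rho66_e_22_11, rho66_e_22_12, rho66_e_22_20, rho66_e_22_21, rho66_e_22_22]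
  simp only [map_add, map_sub, _root_.map_mul, map_ofNat, Complex.conj_conj]
  ring

lemma N66_herm : ∀ i j : Fin 9, conj'' (N66 i j) = N66 j i := by
  intro i j
  fin_cases i <;> fin_cases j <;>
    norm_num [N66, Matrix.cons_val', Matrix.cons_val_zero, Matrix.cons_val_one,
      Matrix.head_cons, Matrix.head_fin_const, Matrix.cons_val_fin_one, Matrix.empty_val',
      map_neg, _root_.map_one, map_ofNat, map_zero]

lemma rho66_herm_entry : ∀ p q : Fin 3 × Fin 3, conj'' (rho66 q p) = rho66 p q := by
  intro p q
  simp only [rho66, _root_.map_mul, map_div₀, _root_.map_one, map_ofNat, N66_herm]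

lemma herm1 : rho66.IsHermitian := by
  show rho66ᴴ = rho66
  ext p q
  rw [Matrix.conjTranspose_apply]
  exact rho66_herm_entry p q

lemma herm2 : (ptrans rho66).IsHermitian := by
  show (ptrans rho66)ᴴ = ptrans rho66
  ext p q
  rw [Matrix.conjTranspose_apply]
  exact rho66_herm_entry (p.1, q.2) (q.1, p.2)

lemma pos1 : rho66.PosSemidef := by
  refine Matrix.PosSemidef.of_dotProduct_mulVec_nonneg herm1 fun x => ?_
  rw [quad1]
  rw [Complex.zero_le_real]
  refine mul_nonneg (by norm_num) ?_
  refine add_nonneg (add_nonneg (add_nonneg (add_nonneg (add_nonneg ?_ ?_) ?_) ?_) ?_) ?_ <;>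
    first
      | exact Complex.normSq_nonneg _
      | exact mul_nonneg (by norm_num) (Complex.normSq_nonneg _)

lemma pos2 : (ptrans rho66).PosSemidef := by
  refine Matrix.PosSemidef.of_dotProduct_mulVec_nonneg herm2 fun x => ?_
  rw [quad2]
  rw [Complex.zero_le_real]
  refine mul_nonneg (by norm_num) ?_
  refine add_nonneg (add_nonneg (add_nonneg (add_nonneg (add_nonneg ?_ ?_) ?_) ?_) ?_) ?_ <;>
    first
      | exact Complex.normSq_nonneg _
      | exact mul_nonneg (by norm_num) (Complex.normSq_nonneg _)

lemma quad_sum {k : ℕ} (M : Fin k → Matrix (Fin 3 × Fin 3) (Fin 3 × Fin 3) ℂ)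
    (v : Fin 3 × Fin 3 → ℂ) :
    star v ⬝ᵥ (∑ i, M i) *ᵥ v = ∑ i, star v ⬝ᵥ (M i) *ᵥ v := by
  induction k with
  | zero => simp [Matrix.zero_mulVec]
  | succ n ih =>
      simp only [Fin.sum_univ_succ, Matrix.add_mulVec, dotProduct_add]
      rw [ih (fun i => M i.succ)]

lemma quad_rank1 (u : Fin 3 × Fin 3 → ℂ) (v : Fin 3 × Fin 3 → ℂ) :
    star v ⬝ᵥ (Matrix.vecMulVec u (fun q => starRingEnd ℂ (u q))) *ᵥ v
      = (starRingEnd ℂ (∑ p, starRingEnd ℂ (v p) * u p)) * (∑ p, starRingEnd ℂ (v p) * u p) := by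
  simp only [dotProduct, mulVec, Matrix.vecMulVec_apply, map_sum, _root_.map_mul,
    Complex.conj_conj, Pi.star_apply, Complex.star_def, Finset.mul_sum, Finset.sum_mul]
  exact Finset.sum_congr rfl fun p _ => Finset.sum_congr rfl fun q _ => by ring

lemma sum_conj_mul_self_eq_zero {k : ℕ} {d : Fin k → ℂ}
    (h : ∑ i, (starRingEnd ℂ (d i)) * d i = 0) : ∀ i, d i = 0 := by
  have e : ∀ z : ℂ, (starRingEnd ℂ z) * z = ((Complex.normSq z : ℝ) : ℂ) := fun z => by
    rw [mul_comm, Complex.mul_conj]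
  simp only [e] at h
  rw [← Complex.ofReal_sum] at h
  have hh : ∑ i, Complex.normSq (d i) = 0 := by exact_mod_cast h
  intro i
  have := (Finset.sum_eq_zero_iff_of_nonneg
    (fun j _ => Complex.normSq_nonneg (d j))).mp hh i (Finset.mem_univ i)
  exact Complex.normSq_eq_zero.mp this


lemma key_alg (a1 a2 a3 b1 b2 b3 : ℂ)
    (hE1 : a3*b1 - a1*b3 - a2*b2 = 0)
    (hE2 : a2*b3 + a3*b2 = 0)
    (hE3 : a1*b1 - a1*b2 - 2*a2*b1 + a3*b3 = 0)
    (hF1 : a1 * conj'' b1 + a2 * conj'' b2 = 0)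
    (hF2 : (a1 - a2) * conj'' b3 + a3 * conj'' b1 = 0)
    (hF3 : a3 * conj'' b2 - a2 * conj'' b1 = 0) :
    (a1 = 0 ∧ a2 = 0 ∧ a3 = 0) ∨ (b1 = 0 ∧ b2 = 0 ∧ b3 = 0) := by
  have hG1 : conj'' a1 * b1 + conj'' a2 * b2 = 0 := by
    have := congrArg conj'' hF1; simpa [map_add, _root_.map_mul] using this
  have hG2 : (conj'' a1 - conj'' a2) * b3 + conj'' a3 * b1 = 0 := by
    have := congrArg conj'' hF2; simpa [map_add, map_sub, _root_.map_mul] using this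
  have hG3 : conj'' a3 * b2 - conj'' a2 * b1 = 0 := by
    have := congrArg conj'' hF3; simpa [map_sub, _root_.map_mul] using this
  set p := conj'' a1 with hp_def
  set q := conj'' a2 with hq_def
  set r := conj'' a3 with hr_def
  by_cases ha2 : a2 = 0
  · have hq0 : q = 0 := by rw [hq_def, ha2, map_zero]
    by_cases ha1 : a1 = 0
    · by_cases ha3 : a3 = 0
      · exact Or.inl ⟨ha1, ha2, ha3⟩
      · refine Or.inr ?_
        have hr0 : r ≠ 0 := by simpa [hr_def, map_eq_zero] using ha3
        have hp0 : p = 0 := by rw [hp_def, ha1, map_zero]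
        have hb2 : b2 = 0 := by
          have : r * b2 = 0 := by linear_combination hG3 + b1 * hq0
          exact (mul_eq_zero.mp this).resolve_left hr0
        have hb1 : b1 = 0 := by
          have : r * b1 = 0 := by linear_combination hG2 - b3 * hp0 + b3 * hq0
          exact (mul_eq_zero.mp this).resolve_left hr0
        have hb3 : b3 = 0 := by
          have : a3 * b3 = 0 := by linear_combination hE3 - b1*ha1 + b2*ha1 + 2*b1*ha2
          exact (mul_eq_zero.mp this).resolve_left ha3
        exact ⟨hb1, hb2, hb3⟩
    · refine Or.inr ?_
      have hp0 : p ≠ 0 := by simpa [hp_def, map_eq_zero] using ha1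
      have hb1 : b1 = 0 := by
        have : p * b1 = 0 := by linear_combination hG1 - b2 * hq0
        exact (mul_eq_zero.mp this).resolve_left hp0
      have hb3 : b3 = 0 := by
        have : a1 * b3 = 0 := by linear_combination -hE1 + a3*hb1 - b2*ha2
        exact (mul_eq_zero.mp this).resolve_left ha1
      have hb2 : b2 = 0 := by
        have : a1 * b2 = 0 := by linear_combination -hE3 + a1*hb1 - 2*b1*ha2 + a3*hb3
        exact (mul_eq_zero.mp this).resolve_left ha1
      exact ⟨hb1, hb2, hb3⟩
  · have hq : q ≠ 0 := by simpa [hq_def, map_eq_zero] using ha2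
    refine Or.inr ?_
    by_cases hb1 : b1 = 0
    · have hb2 : b2 = 0 := by
        have : q * b2 = 0 := by linear_combination hG1 - p*hb1
        exact (mul_eq_zero.mp this).resolve_left hq
      have hb3 : b3 = 0 := by
        have : a2 * b3 = 0 := by linear_combination hE2 - a3*hb2
        exact (mul_eq_zero.mp this).resolve_left ha2
      exact ⟨hb1, hb2, hb3⟩
    · exfalso
      have hpr : p*r + q^2 = 0 := by
        have h0 : (p*r + q^2) * b1 = 0 := by linear_combination r*hG1 - q*hG3
        exact (mul_eq_zero.mp h0).resolve_right hb1
      have hp0 : p ≠ 0 := by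
        intro h
        have : q^2 = 0 := by linear_combination hpr - r*h
        exact hq (sq_eq_zero_iff.mp this)
      have hAA : a1*a3 + a2^2 = 0 := by
        have := congrArg conj'' hpr
        simpa [map_add, _root_.map_mul, map_pow, hp_def, hq_def, hr_def, Complex.conj_conj] using this
      have hT3 : q*a3 + 2*a2*p = 0 := by
        have h0 : (q*a3 + 2*a2*p) * (a2*b1) = 0 := by
          linear_combination (q*a2)*hE1 + (q*a1)*hE2 - (q*b2)*hAA + (2*a2^2)*hG1
        exact (mul_eq_zero.mp h0).resolve_right (mul_ne_zero ha2 hb1)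
      have hT3' : a2*r + 2*q*a1 = 0 := by
        have := congrArg conj'' hT3
        simpa [map_add, _root_.map_mul, map_ofNat, hp_def, hq_def, hr_def, Complex.conj_conj] using this
      have ha1q : 2*p*a1 - q*a2 = 0 := by
        have h0 : (2*p*a1 - q*a2) * q = 0 := by linear_combination p*hT3' - a2*hpr
        exact (mul_eq_zero.mp h0).resolve_right hq
      have hB3 : q*a2*b3 - a3*p*b1 = 0 := by linear_combination q*hE2 - a3*hG1
      have hT4 : (p - q)*a3*p + a2*q*r = 0 := by
        have h0 : ((p - q)*a3*p + a2*q*r) * b1 = 0 := by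
          linear_combination (a2*q)*hG2 - (p-q)*hB3
        exact (mul_eq_zero.mp h0).resolve_right hb1
      have hR1 : 2*p^4 - 2*p^3*q + q^4 = 0 := by
        have h0 : (2*p^4 - 2*p^3*q + q^4) * (a2*q) = 0 := by
          linear_combination (-(p*q^2))*hT4 + (p^2*q*(p-q))*hT3 + (p*q^3)*hT3' + (-(q^4))*ha1q
        exact (mul_eq_zero.mp h0).resolve_right (mul_ne_zero ha2 hq)
      have hT5 : a1*a2*q + a1*a2*p - 2*a2^2*q + a3^2*p = 0 := by
        have h0 : (a1*a2*q + a1*a2*p - 2*a2^2*q + a3^2*p) * b1 = 0 := by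
          linear_combination (a2*q)*hE3 + (a1*a2)*hG1 - a3*hB3
        exact (mul_eq_zero.mp h0).resolve_right hb1
      have hR2 : 8*p^4 - 3*p*q^3 + q^4 = 0 := by
        have h0 : (8*p^4 - 3*p*q^3 + q^4) * (a2^2) = 0 := by
          linear_combination (2*p*q^2)*hT5 - (2*p)*(p*(q*a3+2*a2*p) - 4*a2*p^2)*hT3
            - (a2*q^3+a2*p*q^2)*ha1q
        exact (mul_eq_zero.mp h0).resolve_right (pow_ne_zero 2 ha2)
      have h3 : 8*p^3 - 3*p*q^2 - 3*q^3 = 0 := by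
        have h0 : (8*p^3 - 3*p*q^2 - 3*q^3) * q = 0 := by
          linear_combination (-(4:ℂ))*hR1 + hR2
        exact (mul_eq_zero.mp h0).resolve_right hq
      have h4 : 3*p^2 + q^2 = 0 := by
        have h0 : (3*p^2 + q^2) * q^2 = 0 := by linear_combination hR2 - p*h3
        exact (mul_eq_zero.mp h0).resolve_right (pow_ne_zero 2 hq)
      have h5 : 17*p + 9*q = 0 := by
        have h0 : (17*p + 9*q) * p^2 = 0 := by linear_combination h3 + (3*(p+q))*h4
        exact (mul_eq_zero.mp h0).resolve_right (pow_ne_zero 2 hp0)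
      have h6 : q^2 = 0 := by
        have : (532:ℂ)*q^2 = 0 := by linear_combination 289*h4 - (3*(17*p - 9*q))*h5
        have h532 : (532:ℂ) ≠ 0 := by norm_num
        exact (mul_eq_zero.mp this).resolve_left h532
      exact hq (sq_eq_zero_iff.mp h6)

noncomputable def kv1 : Fin 3 × Fin 3 → ℂ := fun p => !![0,0,-1; 0,-1,0; 1,0,0] p.1 p.2
noncomputable def kv2 : Fin 3 × Fin 3 → ℂ := fun p => !![0,0,0; 0,0,1; 0,1,0] p.1 p.2
noncomputable def kv3 : Fin 3 × Fin 3 → ℂ := fun p => !![1,-1,0; -2,0,0; 0,0,1] p.1 p.2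
noncomputable def ku1 : Fin 3 × Fin 3 → ℂ := fun p => !![1,0,0; 0,1,0; 0,0,0] p.1 p.2
noncomputable def ku2 : Fin 3 × Fin 3 → ℂ := fun p => !![0,0,1; 0,0,-1; 1,0,0] p.1 p.2
noncomputable def ku3 : Fin 3 × Fin 3 → ℂ := fun p => !![0,0,0; -1,0,0; 0,1,0] p.1 p.2

@[simp] lemma kv1_e_00 : kv1 ((0:Fin 3),(0:Fin 3)) = (0 : ℂ) := rfl
@[simp] lemma kv1_e_01 : kv1 ((0:Fin 3),(1:Fin 3)) = (0 : ℂ) := rfl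
@[simp] lemma kv1_e_02 : kv1 ((0:Fin 3),(2:Fin 3)) = ((-1) : ℂ) := rfl
@[simp] lemma kv1_e_10 : kv1 ((1:Fin 3),(0:Fin 3)) = (0 : ℂ) := rfl
@[simp] lemma kv1_e_11 : kv1 ((1:Fin 3),(1:Fin 3)) = ((-1) : ℂ) := rfl
@[simp] lemma kv1_e_12 : kv1 ((1:Fin 3),(2:Fin 3)) = (0 : ℂ) := rfl
@[simp] lemma kv1_e_20 : kv1 ((2:Fin 3),(0:Fin 3)) = (1 : ℂ) := rfl
@[simp] lemma kv1_e_21 : kv1 ((2:Fin 3),(1:Fin 3)) = (0 : ℂ) := rfl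
@[simp] lemma kv1_e_22 : kv1 ((2:Fin 3),(2:Fin 3)) = (0 : ℂ) := rfl
@[simp] lemma kv2_e_00 : kv2 ((0:Fin 3),(0:Fin 3)) = (0 : ℂ) := rfl
@[simp] lemma kv2_e_01 : kv2 ((0:Fin 3),(1:Fin 3)) = (0 : ℂ) := rfl
@[simp] lemma kv2_e_02 : kv2 ((0:Fin 3),(2:Fin 3)) = (0 : ℂ) := rfl
@[simp] lemma kv2_e_10 : kv2 ((1:Fin 3),(0:Fin 3)) = (0 : ℂ) := rfl
@[simp] lemma kv2_e_11 : kv2 ((1:Fin 3),(1:Fin 3)) = (0 : ℂ) := rfl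
@[simp] lemma kv2_e_12 : kv2 ((1:Fin 3),(2:Fin 3)) = (1 : ℂ) := rfl
@[simp] lemma kv2_e_20 : kv2 ((2:Fin 3),(0:Fin 3)) = (0 : ℂ) := rfl
@[simp] lemma kv2_e_21 : kv2 ((2:Fin 3),(1:Fin 3)) = (1 : ℂ) := rfl
@[simp] lemma kv2_e_22 : kv2 ((2:Fin 3),(2:Fin 3)) = (0 : ℂ) := rfl
@[simp] lemma kv3_e_00 : kv3 ((0:Fin 3),(0:Fin 3)) = (1 : ℂ) := rfl
@[simp] lemma kv3_e_01 : kv3 ((0:Fin 3),(1:Fin 3)) = ((-1) : ℂ) := rfl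
@[simp] lemma kv3_e_02 : kv3 ((0:Fin 3),(2:Fin 3)) = (0 : ℂ) := rfl
@[simp] lemma kv3_e_10 : kv3 ((1:Fin 3),(0:Fin 3)) = ((-2) : ℂ) := rfl
@[simp] lemma kv3_e_11 : kv3 ((1:Fin 3),(1:Fin 3)) = (0 : ℂ) := rfl
@[simp] lemma kv3_e_12 : kv3 ((1:Fin 3),(2:Fin 3)) = (0 : ℂ) := rfl
@[simp] lemma kv3_e_20 : kv3 ((2:Fin 3),(0:Fin 3)) = (0 : ℂ) := rfl
@[simp] lemma kv3_e_21 : kv3 ((2:Fin 3),(1:Fin 3)) = (0 : ℂ) := rfl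
@[simp] lemma kv3_e_22 : kv3 ((2:Fin 3),(2:Fin 3)) = (1 : ℂ) := rfl
@[simp] lemma ku1_e_00 : ku1 ((0:Fin 3),(0:Fin 3)) = (1 : ℂ) := rfl
@[simp] lemma ku1_e_01 : ku1 ((0:Fin 3),(1:Fin 3)) = (0 : ℂ) := rfl
@[simp] lemma ku1_e_02 : ku1 ((0:Fin 3),(2:Fin 3)) = (0 : ℂ) := rfl
@[simp] lemma ku1_e_10 : ku1 ((1:Fin 3),(0:Fin 3)) = (0 : ℂ) := rfl
@[simp] lemma ku1_e_11 : ku1 ((1:Fin 3),(1:Fin 3)) = (1 : ℂ) := rfl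
@[simp] lemma ku1_e_12 : ku1 ((1:Fin 3),(2:Fin 3)) = (0 : ℂ) := rfl
@[simp] lemma ku1_e_20 : ku1 ((2:Fin 3),(0:Fin 3)) = (0 : ℂ) := rfl
@[simp] lemma ku1_e_21 : ku1 ((2:Fin 3),(1:Fin 3)) = (0 : ℂ) := rfl
@[simp] lemma ku1_e_22 : ku1 ((2:Fin 3),(2:Fin 3)) = (0 : ℂ) := rfl
@[simp] lemma ku2_e_00 : ku2 ((0:Fin 3),(0:Fin 3)) = (0 : ℂ) := rfl
@[simp] lemma ku2_e_01 : ku2 ((0:Fin 3),(1:Fin 3)) = (0 : ℂ) := rfl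
@[simp] lemma ku2_e_02 : ku2 ((0:Fin 3),(2:Fin 3)) = (1 : ℂ) := rfl
@[simp] lemma ku2_e_10 : ku2 ((1:Fin 3),(0:Fin 3)) = (0 : ℂ) := rfl
@[simp] lemma ku2_e_11 : ku2 ((1:Fin 3),(1:Fin 3)) = (0 : ℂ) := rfl
@[simp] lemma ku2_e_12 : ku2 ((1:Fin 3),(2:Fin 3)) = ((-1) : ℂ) := rfl
@[simp] lemma ku2_e_20 : ku2 ((2:Fin 3),(0:Fin 3)) = (1 : ℂ) := rfl
@[simp] lemma ku2_e_21 : ku2 ((2:Fin 3),(1:Fin 3)) = (0 : ℂ) := rfl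
@[simp] lemma ku2_e_22 : ku2 ((2:Fin 3),(2:Fin 3)) = (0 : ℂ) := rfl
@[simp] lemma ku3_e_00 : ku3 ((0:Fin 3),(0:Fin 3)) = (0 : ℂ) := rfl
@[simp] lemma ku3_e_01 : ku3 ((0:Fin 3),(1:Fin 3)) = (0 : ℂ) := rfl
@[simp] lemma ku3_e_02 : ku3 ((0:Fin 3),(2:Fin 3)) = (0 : ℂ) := rfl
@[simp] lemma ku3_e_10 : ku3 ((1:Fin 3),(0:Fin 3)) = ((-1) : ℂ) := rfl
@[simp] lemma ku3_e_11 : ku3 ((1:Fin 3),(1:Fin 3)) = (0 : ℂ) := rfl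
@[simp] lemma ku3_e_12 : ku3 ((1:Fin 3),(2:Fin 3)) = (0 : ℂ) := rfl
@[simp] lemma ku3_e_20 : ku3 ((2:Fin 3),(0:Fin 3)) = (0 : ℂ) := rfl
@[simp] lemma ku3_e_21 : ku3 ((2:Fin 3),(1:Fin 3)) = (1 : ℂ) := rfl
@[simp] lemma ku3_e_22 : ku3 ((2:Fin 3),(2:Fin 3)) = (0 : ℂ) := rfl
@[simp] lemma kv1_e_z : kv1 ((0:Fin 3 × Fin 3)) = (0 : ℂ) := rfl
@[simp] lemma kv1_e_o : kv1 ((1:Fin 3 × Fin 3)) = ((-1) : ℂ) := rfl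
@[simp] lemma kv2_e_z : kv2 ((0:Fin 3 × Fin 3)) = (0 : ℂ) := rfl
@[simp] lemma kv2_e_o : kv2 ((1:Fin 3 × Fin 3)) = (0 : ℂ) := rfl
@[simp] lemma kv3_e_z : kv3 ((0:Fin 3 × Fin 3)) = (1 : ℂ) := rfl
@[simp] lemma kv3_e_o : kv3 ((1:Fin 3 × Fin 3)) = (0 : ℂ) := rfl
@[simp] lemma ku1_e_z : ku1 ((0:Fin 3 × Fin 3)) = (1 : ℂ) := rfl
@[simp] lemma ku1_e_o : ku1 ((1:Fin 3 × Fin 3)) = (1 : ℂ) := rfl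
@[simp] lemma ku2_e_z : ku2 ((0:Fin 3 × Fin 3)) = (0 : ℂ) := rfl
@[simp] lemma ku2_e_o : ku2 ((1:Fin 3 × Fin 3)) = (0 : ℂ) := rfl
@[simp] lemma ku3_e_z : ku3 ((0:Fin 3 × Fin 3)) = (0 : ℂ) := rfl
@[simp] lemma ku3_e_o : ku3 ((1:Fin 3 × Fin 3)) = (0 : ℂ) := rfl


/-- `ρ₆₆` is a PPT entangled state: it is positive semidefinite,
its partial transpose is positive semidefinite, and it is not separable. -/
theorem rho66_ppt_entangled :
    rho66.PosSemidef ∧ (ptrans rho66).PosSemidef ∧ ¬ IsSeparableState rho66 := by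
  refine ⟨pos1, pos2, ?_⟩
  rintro ⟨k, a, b, hab⟩
  have habPT : ptrans rho66 = ∑ i : Fin k,
      Matrix.vecMulVec (prodVec (a i) (fun j => conj'' (b i j)))
        (fun q => conj'' (prodVec (a i) (fun j => conj'' (b i j)) q)) := by
    ext p q
    simp only [ptrans, hab, Matrix.sum_apply, Matrix.vecMulVec_apply, prodVec,
      _root_.map_mul, Complex.conj_conj]
    exact Finset.sum_congr rfl fun i _ => by ring
  have main : ∀ (v : Fin 3 × Fin 3 → ℂ), star v ⬝ᵥ rho66 *ᵥ v = 0 →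
      ∀ i, ∑ p, conj'' (v p) * prodVec (a i) (b i) p = 0 := by
    intro v hv
    apply sum_conj_mul_self_eq_zero
    rw [hab, quad_sum] at hv
    simp only [quad_rank1] at hv
    exact hv
  have mainPT : ∀ (v : Fin 3 × Fin 3 → ℂ), star v ⬝ᵥ (ptrans rho66) *ᵥ v = 0 →
      ∀ i, ∑ p, conj'' (v p) * (prodVec (a i) (fun j => conj'' (b i j))) p = 0 := by
    intro v hv
    apply sum_conj_mul_self_eq_zero
    rw [habPT, quad_sum] at hv
    simp only [quad_rank1] at hv
    exact hv
  have hEq1 := main kv1 (by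
    rw [quad1]
    norm_num [kv1_e_z, kv1_e_o, kv1_e_00, kv1_e_01, kv1_e_02, kv1_e_10, kv1_e_11, kv1_e_12, kv1_e_20, kv1_e_21, kv1_e_22])
  have hEq2 := main kv2 (by
    rw [quad1]
    norm_num [kv2_e_z, kv2_e_o, kv2_e_00, kv2_e_01, kv2_e_02, kv2_e_10, kv2_e_11, kv2_e_12, kv2_e_20, kv2_e_21, kv2_e_22])
  have hEq3 := main kv3 (by
    rw [quad1]
    norm_num [kv3_e_z, kv3_e_o, kv3_e_00, kv3_e_01, kv3_e_02, kv3_e_10, kv3_e_11, kv3_e_12, kv3_e_20, kv3_e_21, kv3_e_22])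
  have hEq4 := mainPT ku1 (by
    rw [quad2]
    norm_num [ku1_e_z, ku1_e_o, ku1_e_00, ku1_e_01, ku1_e_02, ku1_e_10, ku1_e_11, ku1_e_12, ku1_e_20, ku1_e_21, ku1_e_22])
  have hEq5 := mainPT ku2 (by
    rw [quad2]
    norm_num [ku2_e_z, ku2_e_o, ku2_e_00, ku2_e_01, ku2_e_02, ku2_e_10, ku2_e_11, ku2_e_12, ku2_e_20, ku2_e_21, ku2_e_22])
  have hEq6 := mainPT ku3 (by
    rw [quad2]
    norm_num [ku3_e_z, ku3_e_o, ku3_e_00, ku3_e_01, ku3_e_02, ku3_e_10, ku3_e_11, ku3_e_12, ku3_e_20, ku3_e_21, ku3_e_22])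
  have hw : ∀ i, prodVec (a i) (b i) = 0 := by
    intro i
    have e1 := hEq1 i
    have e2 := hEq2 i
    have e3 := hEq3 i
    have e4 := hEq4 i
    have e5 := hEq5 i
    have e6 := hEq6 i
    simp only [Fintype.sum_prod_type, Fin.sum_univ_three, prodVec, kv1_e_00, kv1_e_01, kv1_e_02, kv1_e_10, kv1_e_11, kv1_e_12, kv1_e_20, kv1_e_21, kv1_e_22, kv2_e_00, kv2_e_01, kv2_e_02, kv2_e_10, kv2_e_11, kv2_e_12, kv2_e_20, kv2_e_21, kv2_e_22, kv3_e_00, kv3_e_01, kv3_e_02, kv3_e_10, kv3_e_11, kv3_e_12, kv3_e_20, kv3_e_21, kv3_e_22, ku1_e_00, ku1_e_01, ku1_e_02, ku1_e_10, ku1_e_11, ku1_e_12, ku1_e_20, ku1_e_21, ku1_e_22, ku2_e_00, ku2_e_01, ku2_e_02, ku2_e_10, ku2_e_11, ku2_e_12, ku2_e_20, ku2_e_21, ku2_e_22, ku3_e_00, ku3_e_01, ku3_e_02, ku3_e_10, ku3_e_11, ku3_e_12, ku3_e_20, ku3_e_21, ku3_e_22,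
      map_neg, _root_.map_one, map_zero, map_ofNat, Complex.conj_ofNat] at e1 e2 e3 e4 e5 e6
    norm_num at e1 e2 e3 e4 e5 e6
    have key := key_alg (a i 0) (a i 1) (a i 2) (b i 0) (b i 1) (b i 2)
      (by linear_combination e1) (by linear_combination e2) (by linear_combination e3)
      (by linear_combination e4) (by linear_combination e5) (by linear_combination e6)
    funext p
    obtain ⟨s, t⟩ := p
    rcases key with ⟨h1, h2, h3⟩ | ⟨h1, h2, h3⟩ <;>
      fin_cases s <;> fin_cases t <;> simp [prodVec, h1, h2, h3]
  have h0 : rho66 ((0:Fin 3),(0:Fin 3)) ((0:Fin 3),(0:Fin 3)) = 0 := by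
    rw [hab]
    simp [Matrix.sum_apply, Matrix.vecMulVec_apply, hw]
  rw [rho66_e_00_00] at h0
  norm_num at h0
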